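/- arXiv:1403.5022 — 3 statements merged into one kernel-verified Lean document; each statement's English description precedes it below -/
import Mathlib

section
/- Let f be a probability distribution on a finite type, and let g_θ(x) ∝ exp⟨θ, τ(x)⟩ be an exponential family with sufficient statistic τ : X → ℝ^d. If θ* is such that the expectation of τ under g_{θ*} equals the expectation of τ under f, then for every θ, the KL divergence D(f ‖ g_{θ*}) ≤ D(f ‖ g_θ). -/
private lemma kl_nonneg' {X : Type*} [Fintype X] (p q : X → ℝ)
    (hp : ∀ x, 0 < p x) (hq : ∀ x, 0 < q x)
    (hps : ∑ x, p x = 1) (hqs : ∑ x, q x = 1) :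
    0 ≤ ∑ x, p x * Real.log (p x / q x) := by
  have h1 : ∑ x, p x * Real.log (q x / p x) ≤ 0 := by
    have hle : ∑ x, p x * Real.log (q x / p x) ≤ ∑ x, (q x - p x) := by
      apply Finset.sum_le_sum
      intro x _
      have hlog := Real.log_le_sub_one_of_pos (div_pos (hq x) (hp x))
      calc p x * Real.log (q x / p x) ≤ p x * (q x / p x - 1) :=
            mul_le_mul_of_nonneg_left hlog (hp x).le
        _ = q x - p x := by rw [mul_sub, mul_one, mul_div_cancel₀ _ (hp x).ne']
    have hz : ∑ x, (q x - p x) = 0 := by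
      rw [Finset.sum_sub_distrib, hps, hqs]; ring
    linarith
  have h2 : ∑ x, p x * Real.log (p x / q x)
      = - ∑ x, p x * Real.log (q x / p x) := by
    rw [← Finset.sum_neg_distrib]
    apply Finset.sum_congr rfl
    intro x _
    rw [Real.log_div (hp x).ne' (hq x).ne', Real.log_div (hq x).ne' (hp x).ne']
    ring
  linarith

/-- Exponential-family moment matching minimises KL divergence:
if the expectation of the sufficient statistic `τ` under `g θ⋆` matches its
expectation under `f`, then `D(f ‖ g θ⋆) ≤ D(f ‖ g θ)` for every `θ`. -/
theorem expFamily_momentMatch_minimizes_KL {X : Type*} [Fintype X] {d : ℕ}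
    (f : X → ℝ) (hf0 : ∀ x, 0 ≤ f x) (hf1 : ∑ x, f x = 1)
    (τ : X → Fin d → ℝ)
    (g : (Fin d → ℝ) → X → ℝ)
    (hg : ∀ θ x, g θ x = Real.exp (∑ i, θ i * τ x i) /
      (∑ x', Real.exp (∑ i, θ i * τ x' i)))
    (θstar : Fin d → ℝ)
    (hmatch : ∀ i, ∑ x, g θstar x * τ x i = ∑ x, f x * τ x i) :
    ∀ θ : Fin d → ℝ,
      ∑ x, f x * Real.log (f x / g θstar x) ≤
        ∑ x, f x * Real.log (f x / g θ x) := by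
  intro θ
  rcases isEmpty_or_nonempty X with hX | hX
  · simp
  · set Z : (Fin d → ℝ) → ℝ := fun θ' => ∑ x', Real.exp (∑ i, θ' i * τ x' i) with hZ
    have hZpos : ∀ θ', 0 < Z θ' := fun θ' =>
      Finset.sum_pos (fun x _ => Real.exp_pos _) Finset.univ_nonempty
    have hgpos : ∀ θ' x, 0 < g θ' x := fun θ' x => by
      rw [hg]; exact div_pos (Real.exp_pos _) (hZpos θ')
    have hgsum : ∀ θ', ∑ x, g θ' x = 1 := by
      intro θ'
      simp only [hg]
      rw [← Finset.sum_div]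
      exact div_self (hZpos θ').ne'
    have hloggeq : ∀ θ' x, Real.log (g θ' x)
        = (∑ i, θ' i * τ x i) - Real.log (Z θ') := by
      intro θ' x
      rw [hg, Real.log_div (Real.exp_pos _).ne' (hZpos θ').ne', Real.log_exp]
    have key : ∀ (θ' : Fin d → ℝ) (p : X → ℝ), (∑ x, p x) = 1 →
        ∑ x, p x * Real.log (g θ' x)
          = (∑ i, θ' i * ∑ x, p x * τ x i) - Real.log (Z θ') := by
      intro θ' p hps
      have hswap : ∑ x, p x * ∑ i, θ' i * τ x i
          = ∑ i, θ' i * ∑ x, p x * τ x i := by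
        simp_rw [Finset.mul_sum]
        rw [Finset.sum_comm]
        apply Finset.sum_congr rfl; intro i _
        apply Finset.sum_congr rfl; intro x _
        ring
      simp only [hloggeq, mul_sub, Finset.sum_sub_distrib, ← Finset.sum_mul, hps,
        one_mul, hswap]
    have hmom : ∀ θ', ∑ x, f x * Real.log (g θ' x)
        = ∑ x, g θstar x * Real.log (g θ' x) := by
      intro θ'
      rw [key θ' f hf1, key θ' (g θstar) (hgsum θstar)]
      congr 1
      apply Finset.sum_congr rfl
      intro i _
      rw [hmatch i]
    have expand : ∀ θ', ∑ x, f x * Real.log (f x / g θ' x)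
        = ∑ x, f x * Real.log (f x) - ∑ x, f x * Real.log (g θ' x) := by
      intro θ'
      rw [← Finset.sum_sub_distrib]
      apply Finset.sum_congr rfl
      intro x _
      rcases (hf0 x).eq_or_lt with h | h
      · simp [← h]
      · rw [Real.log_div h.ne' (hgpos θ' x).ne']; ring
    have hkl := kl_nonneg' (g θstar) (g θ) (hgpos θstar) (hgpos θ)
      (hgsum θstar) (hgsum θ)
    have hexp2 : ∑ x, g θstar x * Real.log (g θstar x / g θ x)
        = ∑ x, g θstar x * Real.log (g θstar x)
          - ∑ x, g θstar x * Real.log (g θ x) := by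
      rw [← Finset.sum_sub_distrib]
      apply Finset.sum_congr rfl
      intro x _
      rw [Real.log_div (hgpos θstar x).ne' (hgpos θ x).ne']; ring
    rw [expand θstar, expand θ, hmom θstar, hmom θ]
    linarith [hkl, hexp2.symm ▸ hkl]
end

section
/- (Convolution formula for set integrals, discrete case.) Let S be a finite type, and let f₁, f₂, v be functions on finite multisets over S. Then ∑_{n≥0} (1/n!) ∑_{x₁,…,xₙ ∈ S} [∑_{I ⊆ {1,…,n}} f₁({xᵢ : i ∈ I}) f₂({xᵢ : i ∉ I})] v({x₁,…,xₙ}) = ∑_{m,k ≥ 0} (1/(m! k!)) ∑_{x₁,…,x_{m+k}} f₁({x₁,…,x_m}) f₂({x_{m+1},…,x_{m+k}}) v({x₁,…,x_{m+k}}), provided both sides converge absolutely. -/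
open Finset

section Aux

variable {S : Type*} [Fintype S] [DecidableEq S]

noncomputable def convB (f₁ f₂ v : Multiset S → ℝ) (m k : ℕ) : ℝ :=
  ∑ x : Fin (m + k) → S,
    f₁ (Multiset.map (fun i : Fin m => x (Fin.castAdd k i)) Finset.univ.val) *
    f₂ (Multiset.map (fun i : Fin k => x (Fin.natAdd m i)) Finset.univ.val) *
    v (Multiset.map x Finset.univ.val)

lemma convKey (f₁ f₂ v : Multiset S → ℝ) {n m k : ℕ} (I : Finset (Fin n))
    (hm : I.card = m) (hk : Iᶜ.card = k) :
    ∑ x : Fin n → S, f₁ (Multiset.map x I.val) * f₂ (Multiset.map x Iᶜ.val) *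
      v (Multiset.map x Finset.univ.val) = convB f₁ f₂ v m k := by
  classical
  have eI : Fin m ≃ {x : Fin n // x ∈ I} := (finCongr hm).symm.trans I.equivFin.symm
  have eC : Fin k ≃ {x : Fin n // ¬ x ∈ I} :=
    ((finCongr hk).symm.trans Iᶜ.equivFin.symm).trans
      (Equiv.subtypeEquivRight (fun x => Finset.mem_compl))
  set σ : Fin (m + k) ≃ Fin n :=
    finSumFinEquiv.symm.trans ((Equiv.sumCongr eI eC).trans (Equiv.sumCompl (· ∈ I))) with hσ
  have hσl : ∀ i : Fin m, σ (Fin.castAdd k i) = (eI i : Fin n) := by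
    intro i
    simp [hσ, finSumFinEquiv_symm_apply_castAdd]
  have hσr : ∀ j : Fin k, σ (Fin.natAdd m j) = (eC j : Fin n) := by
    intro j
    simp [hσ, finSumFinEquiv_symm_apply_natAdd]
  have hInjL : Function.Injective (fun i : Fin m => σ (Fin.castAdd k i)) :=
    σ.injective.comp (Fin.castAdd_injective m k)
  have hnat : Function.Injective (Fin.natAdd m : Fin k → Fin (m + k)) := by
    intro a b h
    simp [Fin.ext_iff] at h ⊢
    omega
  have hInjR : Function.Injective (fun j : Fin k => σ (Fin.natAdd m j)) :=
    σ.injective.comp hnat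
  have hIfin : Finset.map ⟨_, hInjL⟩ (Finset.univ : Finset (Fin m)) = I := by
    apply Finset.eq_of_subset_of_card_le
    · intro a ha
      simp only [Finset.mem_map, Finset.mem_univ, true_and] at ha
      obtain ⟨i, rfl⟩ := ha
      simp only [Function.Embedding.coeFn_mk]
      rw [hσl]
      exact (eI i).2
    · simp [hm]
  have hCfin : Finset.map ⟨_, hInjR⟩ (Finset.univ : Finset (Fin k)) = Iᶜ := by
    apply Finset.eq_of_subset_of_card_le
    · intro a ha
      simp only [Finset.mem_map, Finset.mem_univ, true_and] at ha
      obtain ⟨j, rfl⟩ := ha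
      simp only [Function.Embedding.coeFn_mk]
      rw [hσr, Finset.mem_compl]
      exact (eC j).2
    · simp [hk]
  have hIval : Multiset.map (fun i : Fin m => σ (Fin.castAdd k i))
      (Finset.univ : Finset (Fin m)).val = I.val := by
    rw [← hIfin]; rfl
  have hCval : Multiset.map (fun j : Fin k => σ (Fin.natAdd m j))
      (Finset.univ : Finset (Fin k)).val = Iᶜ.val := by
    rw [← hCfin]; rfl
  have hUval : Multiset.map σ (Finset.univ : Finset (Fin (m + k))).val =
      (Finset.univ : Finset (Fin n)).val := by
    have : Finset.map σ.toEmbedding (Finset.univ : Finset (Fin (m + k))) = Finset.univ :=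
      Finset.map_univ_equiv σ
    rw [← this]; rfl
  rw [convB]
  refine Fintype.sum_bijective (fun x : Fin n → S => x ∘ σ)
    (Equiv.arrowCongr σ.symm (Equiv.refl S)).bijective _ _ ?_
  intro x
  rw [← hIval, ← hCval, ← hUval, Multiset.map_map, Multiset.map_map, Multiset.map_map]
  rfl

lemma convLn (f₁ f₂ v : Multiset S → ℝ) (n : ℕ) :
    (n.factorial : ℝ)⁻¹ * ∑ x : Fin n → S, (∑ I : Finset (Fin n),
        f₁ (Multiset.map x I.val) * f₂ (Multiset.map x Iᶜ.val)) *
        v (Multiset.map x Finset.univ.val) =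
      ∑ m ∈ Finset.range (n + 1),
        ((m.factorial : ℝ) * ((n - m).factorial : ℝ))⁻¹ * convB f₁ f₂ v m (n - m) := by
  classical
  have h1 : ∑ x : Fin n → S, (∑ I : Finset (Fin n),
      f₁ (Multiset.map x I.val) * f₂ (Multiset.map x Iᶜ.val)) *
      v (Multiset.map x Finset.univ.val)
      = ∑ I : Finset (Fin n), ∑ x : Fin n → S,
        f₁ (Multiset.map x I.val) * f₂ (Multiset.map x Iᶜ.val) *
        v (Multiset.map x Finset.univ.val) := by
    rw [Finset.sum_comm]
    congr 1
    ext x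
    rw [Finset.sum_mul]
  rw [h1]
  have h2 : ∑ I : Finset (Fin n), ∑ x : Fin n → S,
      f₁ (Multiset.map x I.val) * f₂ (Multiset.map x Iᶜ.val) *
      v (Multiset.map x Finset.univ.val)
      = ∑ m ∈ Finset.range (n + 1), (n.choose m : ℝ) * convB f₁ f₂ v m (n - m) := by
    rw [← Finset.powerset_univ, Finset.sum_powerset]
    simp only [Finset.card_univ, Fintype.card_fin]
    refine Finset.sum_congr rfl fun m hm => ?_
    rw [Finset.sum_congr rfl (fun I hI => ?_), Finset.sum_const,
      Finset.card_powersetCard, Finset.card_univ, Fintype.card_fin, nsmul_eq_mul]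
    have hIm : I.card = m := (Finset.mem_powersetCard.mp hI).2
    exact convKey f₁ f₂ v I hIm (by rw [Finset.card_compl, hIm, Fintype.card_fin])
  rw [h2, Finset.mul_sum]
  refine Finset.sum_congr rfl fun m hm => ?_
  have hmn : m ≤ n := Nat.lt_succ_iff.mp (Finset.mem_range.mp hm)
  have hfac : (n.choose m : ℝ) * (m.factorial : ℝ) * ((n - m).factorial : ℝ)
      = (n.factorial : ℝ) := by
    exact_mod_cast congrArg (Nat.cast : ℕ → ℝ)
      (Nat.choose_mul_factorial_mul_factorial hmn)
  have h₀ : (n.factorial : ℝ) ≠ 0 := Nat.cast_ne_zero.mpr n.factorial_ne_zero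
  have h₁ : (m.factorial : ℝ) ≠ 0 := Nat.cast_ne_zero.mpr m.factorial_ne_zero
  have h₂ : ((n - m).factorial : ℝ) ≠ 0 := Nat.cast_ne_zero.mpr (n - m).factorial_ne_zero
  rw [← mul_assoc]
  congr 1
  field_simp
  linarith [hfac]

def diagEquiv : (Σ n : ℕ, Fin (n + 1)) ≃ ℕ × ℕ where
  toFun p := (p.2, p.1 - p.2)
  invFun q := ⟨q.1 + q.2, ⟨q.1, by omega⟩⟩
  left_inv p := by
    obtain ⟨n, i⟩ := p
    dsimp only
    have hi : (i : ℕ) ≤ n := Nat.lt_succ_iff.mp i.isLt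
    have h : (i : ℕ) + (n - (i : ℕ)) = n := by omega
    refine Sigma.ext h ?_
    rw [Fin.heq_ext_iff (congrArg (· + 1) h)]
  right_inv q := by
    obtain ⟨a, b⟩ := q
    simp

end Aux

theorem setIntegral_convolution' {S : Type*} [Fintype S] [DecidableEq S]
    (f₁ f₂ v : Multiset S → ℝ)
    (hR : Summable fun mk : ℕ × ℕ =>
      |(((mk.1.factorial : ℝ) * (mk.2.factorial : ℝ))⁻¹ *
        ∑ x : Fin (mk.1 + mk.2) → S,
          f₁ (Multiset.map (fun i : Fin mk.1 => x (Fin.castAdd mk.2 i))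
              Finset.univ.val) *
          f₂ (Multiset.map (fun i : Fin mk.2 => x (Fin.natAdd mk.1 i))
              Finset.univ.val) *
          v (Multiset.map x Finset.univ.val))|) :
    (∑' n : ℕ, (n.factorial : ℝ)⁻¹ * ∑ x : Fin n → S, (∑ I : Finset (Fin n),
        f₁ (Multiset.map x I.val) * f₂ (Multiset.map x Iᶜ.val)) *
        v (Multiset.map x Finset.univ.val)) =
      ∑' mk : ℕ × ℕ, ((mk.1.factorial : ℝ) * (mk.2.factorial : ℝ))⁻¹ *
        ∑ x : Fin (mk.1 + mk.2) → S,
          f₁ (Multiset.map (fun i : Fin mk.1 => x (Fin.castAdd mk.2 i))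
              Finset.univ.val) *
          f₂ (Multiset.map (fun i : Fin mk.2 => x (Fin.natAdd mk.1 i))
              Finset.univ.val) *
          v (Multiset.map x Finset.univ.val) := by
  classical
  let a : ℕ × ℕ → ℝ := fun mk =>
    ((mk.1.factorial : ℝ) * (mk.2.factorial : ℝ))⁻¹ * convB f₁ f₂ v mk.1 mk.2
  show _ = ∑' mk : ℕ × ℕ, a mk
  have hsum : Summable a := summable_abs_iff.mp hR
  have hsig : Summable (a ∘ diagEquiv) := diagEquiv.summable_iff.mpr hsum
  have step1 : ∑' mk : ℕ × ℕ, a mk = ∑' p : Σ n : ℕ, Fin (n + 1), a (diagEquiv p) :=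
    (diagEquiv.tsum_eq a).symm
  have step2 : ∑' p : Σ n : ℕ, Fin (n + 1), a (diagEquiv p)
      = ∑' n : ℕ, ∑' i : Fin (n + 1), a (diagEquiv ⟨n, i⟩) := Summable.tsum_sigma hsig
  rw [step1, step2]
  refine tsum_congr fun n => ?_
  rw [tsum_fintype, convLn f₁ f₂ v n, ← Fin.sum_univ_eq_sum_range
    (fun m => ((m.factorial : ℝ) * ((n - m).factorial : ℝ))⁻¹ * convB f₁ f₂ v m (n - m)) (n + 1)]
  rfl

/-- Convolution formula for set integrals (discrete case): the set integral of
`(f₁ ⋆ f₂)(X) = ∑_{Y ⊆ X} f₁(Y) f₂(X − Y)` against `v` equals the double set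
integral of `f₁(X₁) f₂(X₂) v(X₁ ∪ X₂)`, provided both sides converge
absolutely. Multisets over the finite type `S` encode unordered finite sets. -/
theorem setIntegral_convolution {S : Type*} [Fintype S] [DecidableEq S]
    (f₁ f₂ v : Multiset S → ℝ)
    (hL : Summable fun n : ℕ =>
      |((n.factorial : ℝ)⁻¹ * ∑ x : Fin n → S, (∑ I : Finset (Fin n),
        f₁ (Multiset.map x I.val) * f₂ (Multiset.map x Iᶜ.val)) *
        v (Multiset.map x Finset.univ.val))|)
    (hR : Summable fun mk : ℕ × ℕ =>
      |(((mk.1.factorial : ℝ) * (mk.2.factorial : ℝ))⁻¹ *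
        ∑ x : Fin (mk.1 + mk.2) → S,
          f₁ (Multiset.map (fun i : Fin mk.1 => x (Fin.castAdd mk.2 i))
              Finset.univ.val) *
          f₂ (Multiset.map (fun i : Fin mk.2 => x (Fin.natAdd mk.1 i))
              Finset.univ.val) *
          v (Multiset.map x Finset.univ.val))|) :
    (∑' n : ℕ, (n.factorial : ℝ)⁻¹ * ∑ x : Fin n → S, (∑ I : Finset (Fin n),
        f₁ (Multiset.map x I.val) * f₂ (Multiset.map x Iᶜ.val)) *
        v (Multiset.map x Finset.univ.val)) =
      ∑' mk : ℕ × ℕ, ((mk.1.factorial : ℝ) * (mk.2.factorial : ℝ))⁻¹ *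
        ∑ x : Fin (mk.1 + mk.2) → S,
          f₁ (Multiset.map (fun i : Fin mk.1 => x (Fin.castAdd mk.2 i))
              Finset.univ.val) *
          f₂ (Multiset.map (fun i : Fin mk.2 => x (Fin.natAdd mk.1 i))
              Finset.univ.val) *
          v (Multiset.map x Finset.univ.val) := by
  exact setIntegral_convolution' f₁ f₂ v hR
end

section
/- (KLSJPDA inner minimization.) Let f be a probability density on (ℝ^d)^n and g an everywhere-positive probability density on (ℝ^d)^n. Over all densities f̃ satisfying the symmetrization constraint ∑_π f̃(πX) = ∑_π f(πX) for all X, the KL divergence ∫ f̃(X) log(f̃(X)/g(X)) dX is minimized by f̃(X) = [g(X)/∑_π g(πX)] · ∑_π f(πX), and the minimum value equals (1/n!) ∫ [∑_π f(πX)] log(∑_π f(πX) / ∑_π g(πX)) dX. -/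
open MeasureTheory

lemma perm_measurePreserving {d n : ℕ} (π : Equiv.Perm (Fin n)) :
    MeasurePreserving (fun X : Fin n → Fin d → ℝ => X ∘ π) volume volume := by
  have h := MeasureTheory.volume_measurePreserving_piCongrLeft
    (fun _ : Fin n => Fin d → ℝ) π.symm
  have hc : ⇑(MeasurableEquiv.piCongrLeft (fun _ : Fin n => Fin d → ℝ) π.symm)
      = fun X : Fin n → Fin d → ℝ => X ∘ ⇑π := by
    funext X
    funext j
    simp only [MeasurableEquiv.coe_piCongrLeft, Function.comp_apply]
    conv_lhs => rw [show j = π.symm (π j) by simp]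
    exact Equiv.piCongrLeft_apply_apply _ _ _ _
  rwa [hc] at h

lemma perm_integrable {d n : ℕ} (π : Equiv.Perm (Fin n))
    {φ : (Fin n → Fin d → ℝ) → ℝ} (hφ : Integrable φ) :
    Integrable (fun X => φ (X ∘ ⇑π)) := by
  have h := MeasureTheory.volume_measurePreserving_piCongrLeft
    (fun _ : Fin n => Fin d → ℝ) π.symm
  have hc : ⇑(MeasurableEquiv.piCongrLeft (fun _ : Fin n => Fin d → ℝ) π.symm)
      = fun X : Fin n → Fin d → ℝ => X ∘ ⇑π := by
    funext X; funext j
    simp only [MeasurableEquiv.coe_piCongrLeft, Function.comp_apply]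
    conv_lhs => rw [show j = π.symm (π j) by simp]
    exact Equiv.piCongrLeft_apply_apply _ _ _ _
  have := (h.integrable_comp_emb (MeasurableEquiv.measurableEmbedding _)).mpr hφ
  rwa [hc] at this

lemma perm_integral {d n : ℕ} (π : Equiv.Perm (Fin n))
    (φ : (Fin n → Fin d → ℝ) → ℝ) :
    ∫ X, φ (X ∘ ⇑π) = ∫ X, φ X := by
  have h := MeasureTheory.volume_measurePreserving_piCongrLeft
    (fun _ : Fin n => Fin d → ℝ) π.symm
  have hc : ⇑(MeasurableEquiv.piCongrLeft (fun _ : Fin n => Fin d → ℝ) π.symm)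
      = fun X : Fin n → Fin d → ℝ => X ∘ ⇑π := by
    funext X; funext j
    simp only [MeasurableEquiv.coe_piCongrLeft, Function.comp_apply]
    conv_lhs => rw [show j = π.symm (π j) by simp]
    exact Equiv.piCongrLeft_apply_apply _ _ _ _
  have := h.integral_comp (MeasurableEquiv.measurableEmbedding _) φ
  rwa [hc] at this

lemma phi_convex {a b c : ℝ} (ha : 0 ≤ a) (hb : 0 < b) (hc : 0 < c) :
    b * Real.log (b / c) + (Real.log (b / c) + 1) * (a - b) ≤ a * Real.log (a / c) := by
  rcases eq_or_lt_of_le ha with h | h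
  · rw [← h]
    simp only [zero_div, Real.log_zero, mul_zero, zero_sub]
    nlinarith [hb]
  · have key : Real.log (b / a) ≤ b / a - 1 := Real.log_le_sub_one_of_pos (by positivity)
    rw [Real.log_div hb.ne' hc.ne', Real.log_div h.ne' hc.ne']
    rw [Real.log_div hb.ne' h.ne'] at key
    have h2 : a * (Real.log b - Real.log a) ≤ b - a := by
      have := mul_le_mul_of_nonneg_left key h.le
      calc a * (Real.log b - Real.log a) ≤ a * (b / a - 1) := this
        _ = b - a := by field_simp
    nlinarith [h2]

lemma sum_comp_perm {d n : ℕ} (φ : (Fin n → Fin d → ℝ) → ℝ)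
    (X : Fin n → Fin d → ℝ) (σ : Equiv.Perm (Fin n)) :
    ∑ π : Equiv.Perm (Fin n), φ ((X ∘ ⇑σ) ∘ ⇑π) = ∑ π : Equiv.Perm (Fin n), φ (X ∘ ⇑π) := by
  rw [← Equiv.sum_comp (Equiv.mulLeft σ) (fun π : Equiv.Perm (Fin n) => φ (X ∘ ⇑π))]
  refine Finset.sum_congr rfl fun π _ => ?_
  simp [Equiv.Perm.coe_mul, Function.comp_assoc]

/-- KLSJPDA inner minimisation: over all densities `f̃` with the same
symmetrisation as `f`, the KL divergence to `g` is minimised by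
`f̃⋆(X) = [g(X)/∑_π g(πX)] ∑_π f(πX)`, and the minimum value equals
`(1/n!) ∫ [∑_π f(πX)] log(∑_π f(πX)/∑_π g(πX)) dX`. -/
theorem klsjpda_inner_minimization {d n : ℕ}
    (f g : (Fin n → Fin d → ℝ) → ℝ)
    (hf0 : ∀ X, 0 ≤ f X) (hf1 : ∫ X : Fin n → Fin d → ℝ, f X = 1)
    (hg : ∀ X, 0 < g X) (hg1 : ∫ X : Fin n → Fin d → ℝ, g X = 1)
    (fstar : (Fin n → Fin d → ℝ) → ℝ)
    (hfstar : ∀ X, fstar X =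
      (g X / ∑ π : Equiv.Perm (Fin n), g (X ∘ π)) *
        ∑ π : Equiv.Perm (Fin n), f (X ∘ π))
    (hstar_int : Integrable (fun X : Fin n → Fin d → ℝ =>
      fstar X * Real.log (fstar X / g X)))
    (hsym_int : Integrable (fun X : Fin n → Fin d → ℝ =>
      (∑ π : Equiv.Perm (Fin n), f (X ∘ π)) *
        Real.log ((∑ π : Equiv.Perm (Fin n), f (X ∘ π)) /
          (∑ π : Equiv.Perm (Fin n), g (X ∘ π))))) :
    (∀ ft : (Fin n → Fin d → ℝ) → ℝ, (∀ X, 0 ≤ ft X) →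
        (∀ X, (∑ π : Equiv.Perm (Fin n), ft (X ∘ π)) =
          ∑ π : Equiv.Perm (Fin n), f (X ∘ π)) →
        Integrable (fun X : Fin n → Fin d → ℝ =>
          ft X * Real.log (ft X / g X)) →
        (∫ X : Fin n → Fin d → ℝ, fstar X * Real.log (fstar X / g X)) ≤
          ∫ X : Fin n → Fin d → ℝ, ft X * Real.log (ft X / g X))
    ∧ (∫ X : Fin n → Fin d → ℝ, fstar X * Real.log (fstar X / g X)) =
        (n.factorial : ℝ)⁻¹ *
          ∫ X : Fin n → Fin d → ℝ,
            (∑ π : Equiv.Perm (Fin n), f (X ∘ π)) *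
              Real.log ((∑ π : Equiv.Perm (Fin n), f (X ∘ π)) /
                (∑ π : Equiv.Perm (Fin n), g (X ∘ π))) := by
  classical
  set F : (Fin n → Fin d → ℝ) → ℝ :=
    fun X => ∑ π : Equiv.Perm (Fin n), f (X ∘ π) with hFdef
  set G : (Fin n → Fin d → ℝ) → ℝ :=
    fun X => ∑ π : Equiv.Perm (Fin n), g (X ∘ π) with hGdef
  have hGpos : ∀ X, 0 < G X :=
    fun X => Finset.sum_pos (fun π _ => hg _) Finset.univ_nonempty
  have hFnn : ∀ X, 0 ≤ F X :=
    fun X => Finset.sum_nonneg fun π _ => hf0 _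
  have hFsymm : ∀ (X) (σ : Equiv.Perm (Fin n)), F (X ∘ ⇑σ) = F X :=
    fun X σ => sum_comp_perm f X σ
  have hGsymm : ∀ (X) (σ : Equiv.Perm (Fin n)), G (X ∘ ⇑σ) = G X :=
    fun X σ => sum_comp_perm g X σ
  have hratio : ∀ X, fstar X / g X = F X / G X := by
    intro X
    have h : fstar X = g X * (F X / G X) := by rw [hfstar X]; ring
    rw [h, mul_div_cancel_left₀ _ (hg X).ne']
  have hfstar_eq : ∀ (X) (π : Equiv.Perm (Fin n)),
      fstar (X ∘ ⇑π) = g (X ∘ ⇑π) * (F X / G X) := by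
    intro X π
    rw [hfstar (X ∘ ⇑π)]
    show g (X ∘ ⇑π) / G (X ∘ ⇑π) * F (X ∘ ⇑π) = _
    rw [hFsymm X π, hGsymm X π]
    ring
  have hsum_fstar : ∀ X, (∑ π : Equiv.Perm (Fin n), fstar (X ∘ ⇑π)) = F X := by
    intro X
    rw [Finset.sum_congr rfl (fun π _ => hfstar_eq X π), ← Finset.sum_mul]
    show G X * (F X / G X) = F X
    rw [mul_comm]
    exact div_mul_cancel₀ _ (hGpos X).ne'
  have hlog_eq : ∀ (X) (π : Equiv.Perm (Fin n)),
      Real.log (fstar (X ∘ ⇑π) / g (X ∘ ⇑π)) = Real.log (F X / G X) := by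
    intro X π
    rw [hratio (X ∘ ⇑π)]
    rw [hFsymm X π, hGsymm X π]
  have hsumPstar : ∀ X,
      (∑ π : Equiv.Perm (Fin n),
        fstar (X ∘ ⇑π) * Real.log (fstar (X ∘ ⇑π) / g (X ∘ ⇑π)))
      = F X * Real.log (F X / G X) := by
    intro X
    have hterm : ∀ π : Equiv.Perm (Fin n),
        fstar (X ∘ ⇑π) * Real.log (fstar (X ∘ ⇑π) / g (X ∘ ⇑π))
        = g (X ∘ ⇑π) * (F X / G X * Real.log (F X / G X)) := by
      intro π
      rw [hlog_eq X π, hfstar_eq X π]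
      ring
    rw [Finset.sum_congr rfl (fun π _ => hterm π), ← Finset.sum_mul]
    show G X * (F X / G X * Real.log (F X / G X)) = _
    rw [← mul_assoc]
    congr 1
    rw [mul_comm]
    exact div_mul_cancel₀ _ (hGpos X).ne'
  have hcard : (Fintype.card (Equiv.Perm (Fin n)) : ℝ) = (n.factorial : ℝ) := by
    rw [Fintype.card_perm, Fintype.card_fin]
  have hfacpos : (0 : ℝ) < (n.factorial : ℝ) := by
    exact_mod_cast Nat.factorial_pos n
  -- the integral of the symmetrised star integrand
  have hstar_sum_int : ∫ X, (∑ π : Equiv.Perm (Fin n),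
      fstar (X ∘ ⇑π) * Real.log (fstar (X ∘ ⇑π) / g (X ∘ ⇑π)))
      = (n.factorial : ℝ) * ∫ X, fstar X * Real.log (fstar X / g X) := by
    rw [integral_finset_sum _ (fun π _ => perm_integrable π hstar_int)]
    rw [Finset.sum_congr rfl (fun π _ =>
      perm_integral π (fun X => fstar X * Real.log (fstar X / g X)))]
    rw [Finset.sum_const, nsmul_eq_mul, Finset.card_univ, hcard]
  have hmin_eq : (∫ X, fstar X * Real.log (fstar X / g X))
      = (n.factorial : ℝ)⁻¹ * ∫ X, F X * Real.log (F X / G X) := by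
    have h1 : ∫ X, (∑ π : Equiv.Perm (Fin n),
        fstar (X ∘ ⇑π) * Real.log (fstar (X ∘ ⇑π) / g (X ∘ ⇑π)))
        = ∫ X, F X * Real.log (F X / G X) := by
      refine integral_congr_ae (Filter.Eventually.of_forall fun X => hsumPstar X)
    rw [h1] at hstar_sum_int
    rw [hstar_sum_int]
    field_simp
  constructor
  · intro ft hft0 hftsym hft_int
    -- pointwise key inequality on symmetrised integrands
    have hkey : ∀ X,
        (∑ π : Equiv.Perm (Fin n),
          fstar (X ∘ ⇑π) * Real.log (fstar (X ∘ ⇑π) / g (X ∘ ⇑π)))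
        ≤ ∑ π : Equiv.Perm (Fin n),
          ft (X ∘ ⇑π) * Real.log (ft (X ∘ ⇑π) / g (X ∘ ⇑π)) := by
      intro X
      rcases eq_or_lt_of_le (hFnn X) with hF0 | hFpos
      · -- F X = 0 : all terms vanish
        have hft_zero : ∀ π : Equiv.Perm (Fin n), ft (X ∘ ⇑π) = 0 := by
          have hsum0 : (∑ π : Equiv.Perm (Fin n), ft (X ∘ ⇑π)) = 0 := by
            rw [hftsym X]; exact hF0.symm
          intro π
          exact (Finset.sum_eq_zero_iff_of_nonneg
            (fun (π : Equiv.Perm (Fin n)) _ => hft0 (X ∘ ⇑π))).mp hsum0 π (Finset.mem_univ π)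
        have h1 : (∑ π : Equiv.Perm (Fin n),
            ft (X ∘ ⇑π) * Real.log (ft (X ∘ ⇑π) / g (X ∘ ⇑π))) = 0 :=
          Finset.sum_eq_zero fun π _ => by rw [hft_zero π]; simp
        have h2 : (∑ π : Equiv.Perm (Fin n),
            fstar (X ∘ ⇑π) * Real.log (fstar (X ∘ ⇑π) / g (X ∘ ⇑π))) = 0 :=
          Finset.sum_eq_zero fun π _ => by
            rw [hfstar_eq X π, ← hF0]; simp
        rw [h1, h2]
      · -- F X > 0 : convexity argument
        have hbpos : ∀ π : Equiv.Perm (Fin n), 0 < fstar (X ∘ ⇑π) := by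
          intro π
          rw [hfstar_eq X π]
          exact mul_pos (hg _) (div_pos hFpos (hGpos X))
        have hA : (∑ π : Equiv.Perm (Fin n),
            fstar (X ∘ ⇑π) * Real.log (fstar (X ∘ ⇑π) / g (X ∘ ⇑π)))
            = ∑ π : Equiv.Perm (Fin n),
              (fstar (X ∘ ⇑π) * Real.log (fstar (X ∘ ⇑π) / g (X ∘ ⇑π))
                + (Real.log (F X / G X) + 1) * (ft (X ∘ ⇑π) - fstar (X ∘ ⇑π))) := by
          rw [Finset.sum_add_distrib, ← Finset.mul_sum, Finset.sum_sub_distrib,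
            hftsym X, hsum_fstar X]
          show _ = _ + (Real.log (F X / G X) + 1) * (F X - F X)
          rw [sub_self, mul_zero, add_zero]
        rw [hA]
        refine Finset.sum_le_sum fun π _ => ?_
        rw [← hlog_eq X π]
        exact phi_convex (hft0 _) (hbpos π) (hg _)
    have hle : ∫ X, (∑ π : Equiv.Perm (Fin n),
        fstar (X ∘ ⇑π) * Real.log (fstar (X ∘ ⇑π) / g (X ∘ ⇑π)))
        ≤ ∫ X, (∑ π : Equiv.Perm (Fin n),
          ft (X ∘ ⇑π) * Real.log (ft (X ∘ ⇑π) / g (X ∘ ⇑π))) := by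
      refine integral_mono
        (integrable_finset_sum _ (fun π _ => perm_integrable π hstar_int))
        (integrable_finset_sum _ (fun π _ => perm_integrable π hft_int))
        hkey
    have hft_sum_int : ∫ X, (∑ π : Equiv.Perm (Fin n),
        ft (X ∘ ⇑π) * Real.log (ft (X ∘ ⇑π) / g (X ∘ ⇑π)))
        = (n.factorial : ℝ) * ∫ X, ft X * Real.log (ft X / g X) := by
      rw [integral_finset_sum _ (fun π _ => perm_integrable π hft_int)]
      rw [Finset.sum_congr rfl (fun π _ =>
        perm_integral π (fun X => ft X * Real.log (ft X / g X)))]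
      rw [Finset.sum_const, nsmul_eq_mul, Finset.card_univ, hcard]
    rw [hstar_sum_int, hft_sum_int] at hle
    exact le_of_mul_le_mul_left hle hfacpos
  · exact hmin_eq
end
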